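/- arXiv:2105.13980 — 2 statements merged into one kernel-verified Lean document; each statement's English description precedes it below -/
import Mathlib

section
/- Every finite tree admits a ρ-decomposition with l = 3: a partition of its vertex set into layers V_1, …, V_L such that (i) every vertex in V_i has at most two neighbors in ⋃_{j ≥ i} V_j, and (ii) the subgraph induced by each layer consists of isolated vertices and paths, obtained by iteratively placing into the current layer all vertices of degree 1 and all vertices lying on induced paths of length at least 3 in the remaining graph; moreover this process terminates (L is finite) because each iteration removes at least a 1/16 fraction of the remaining vertices. -/
open SimpleGraph Finset


lemma parent_walk {V : Type*} [DecidableEq V] (G : SimpleGraph V) (hT : G.IsTree) (root : V)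
    (f : ∀ v, G.Walk v root) (hf : ∀ v, (f v).IsPath)
    (hf' : ∀ v (q : G.Walk v root), q.IsPath → q = f v)
    {x y : V} (h : G.Adj x y) (hle : (f x).length ≤ (f y).length) :
    f y = SimpleGraph.Walk.cons h.symm (f x) := by
  refine (hf' y _ ?_).symm
  rw [SimpleGraph.Walk.cons_isPath_iff]
  refine ⟨hf x, fun hy => ?_⟩
  have h1 : (f x).takeUntil y hy = SimpleGraph.Walk.cons h SimpleGraph.Walk.nil := by
    refine ExistsUnique.unique (hT.existsUnique_path x y) ((hf x).takeUntil hy) ?_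
    exact SimpleGraph.Walk.IsPath.nil.cons (by simpa using h.ne)
  have h2 := congrArg SimpleGraph.Walk.length (SimpleGraph.Walk.take_spec (f x) hy)
  rw [SimpleGraph.Walk.length_append, h1,
    hf' y _ ((hf x).dropUntil hy)] at h2
  simp at h2
  omega

lemma tree_deg_sum {V : Type*} [Fintype V] (G : SimpleGraph V) [DecidableRel G.Adj]
    (hT : G.IsTree) (s : Finset V) :
    ∑ v ∈ s, ((s.filter fun u => G.Adj v u).card) ≤ 2 * s.card := by
  classical
  obtain ⟨root⟩ := hT.isConnected.nonempty
  choose f hf hf' using (hT.existsUnique_path · root)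
  set D : Finset (V × V) := (s ×ˢ s).filter (fun p => G.Adj p.1 p.2) with hD
  have hsum : ∑ v ∈ s, ((s.filter fun u => G.Adj v u).card) = D.card := by
    rw [Finset.card_eq_sum_card_fiberwise (f := Prod.fst) (t := s)
      (fun p hp => (Finset.mem_product.mp (Finset.mem_filter.mp hp).1).1)]
    refine Finset.sum_congr rfl fun v hv => ?_
    refine (Finset.card_bij (fun p _ => p.2) ?_ ?_ ?_).symm
    · rintro ⟨a, b⟩ hp
      simp only [hD, Finset.mem_filter, Finset.mem_product] at hp ⊢
      obtain ⟨⟨⟨ha, hb⟩, hadj⟩, rfl⟩ := hp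
      exact ⟨hb, hadj⟩
    · rintro ⟨a, b⟩ ha ⟨c, d⟩ hc h
      simp only [Finset.mem_filter] at ha hc
      simp only [Prod.mk.injEq]
      exact ⟨ha.2.trans hc.2.symm, h⟩
    · intro u hu
      simp only [Finset.mem_filter] at hu
      exact ⟨(v, u), by simp [hD, Finset.mem_filter, Finset.mem_product, hv, hu.1, hu.2], rfl⟩
  rw [hsum]
  have key : ∀ {x y : V} (h : G.Adj x y), (f x).length ≤ (f y).length →
      f y = SimpleGraph.Walk.cons h.symm (f x) :=
    fun {x y} h hle => parent_walk G hT root f hf hf' h hle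
  -- injection into s × Bool
  have hinj : ∀ p ∈ D, ∀ q ∈ D,
      ((if (f p.1).length ≤ (f p.2).length then p.2 else p.1),
        decide ((f p.1).length ≤ (f p.2).length)) =
      ((if (f q.1).length ≤ (f q.2).length then q.2 else q.1),
        decide ((f q.1).length ≤ (f q.2).length)) → p = q := by
    rintro ⟨a, b⟩ hp ⟨c, d⟩ hq heq
    simp only [hD, Finset.mem_filter, Finset.mem_product] at hp hq
    have hab : G.Adj a b := hp.2
    have hcd : G.Adj c d := hq.2
    simp only [Prod.mk.injEq] at heq
    obtain ⟨h1, h2⟩ := heq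
    rw [decide_eq_decide] at h2
    by_cases hle : (f a).length ≤ (f b).length
    · have hle' : (f c).length ≤ (f d).length := h2.mp hle
      rw [if_pos hle, if_pos hle'] at h1
      subst h1
      have e1 := key hab hle
      have e2 := key hcd hle'
      have : a = c := by
        have := e1.symm.trans e2
        have ha' : (SimpleGraph.Walk.cons hab.symm (f a)).getVert 1 =
            (SimpleGraph.Walk.cons hcd.symm (f c)).getVert 1 := by rw [this]
        simpa using ha'
      simp [this]
    · have hle' : ¬ (f c).length ≤ (f d).length := fun hx => hle (h2.mpr hx)
      rw [if_neg hle, if_neg hle'] at h1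
      subst h1
      have e1 := key hab.symm (le_of_not_ge hle)
      have e2 := key hcd.symm (le_of_not_ge hle')
      have : b = d := by
        have := e1.symm.trans e2
        have ha' : (SimpleGraph.Walk.cons hab (f b)).getVert 1 =
            (SimpleGraph.Walk.cons hcd (f d)).getVert 1 := by rw [this]
        simpa using ha'
      simp [this]
  calc D.card ≤ (s ×ˢ (Finset.univ : Finset Bool)).card := by
        refine Finset.card_le_card_of_injOn
          (fun p => ((if (f p.1).length ≤ (f p.2).length then p.2 else p.1),
            decide ((f p.1).length ≤ (f p.2).length))) ?_ ?_
        · rintro ⟨a, b⟩ hp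
          replace hp : (a, b) ∈ D := hp
          simp only [hD, Finset.mem_filter, Finset.mem_product] at hp
          simp only [Finset.mem_coe, Finset.mem_product, Finset.mem_univ, and_true]
          split <;> [exact hp.1.2; exact hp.1.1]
        · exact fun p hp q hq => hinj p hp q hq
    _ = 2 * s.card := by simp [Finset.card_product, mul_comm]


private def peel {V : Type*} [Fintype V] (G : SimpleGraph V) [DecidableRel G.Adj] :
    ℕ → Finset V
  | 0 => Finset.univ
  | k + 1 => (peel G k).filter fun v => 3 ≤ ((peel G k).filter fun u => G.Adj v u).card

private lemma peel_antitone {V : Type*} [Fintype V] (G : SimpleGraph V) [DecidableRel G.Adj]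
    {j k : ℕ} (h : j ≤ k) : peel G k ⊆ peel G j := by
  induction k with
  | zero => simp [Nat.le_zero.mp h]
  | succ k ih =>
    rcases Nat.lt_or_ge j (k+1) with h' | h'
    · exact (Finset.filter_subset _ _).trans (ih (Nat.lt_succ_iff.mp h'))
    · have : j = k + 1 := le_antisymm h h'
      subst this; exact Finset.Subset.refl _

private lemma peel_descent {V : Type*} [Fintype V] (G : SimpleGraph V) [DecidableRel G.Adj]
    (hds : ∀ s : Finset V, ∑ v ∈ s, ((s.filter fun u => G.Adj v u).card) ≤ 2 * s.card)
    (k : ℕ) : 3 * (peel G (k+1)).card ≤ 2 * (peel G k).card := by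
  calc 3 * (peel G (k+1)).card
      = ∑ _v ∈ peel G (k+1), 3 := by rw [Finset.sum_const, smul_eq_mul, mul_comm]
    _ ≤ ∑ v ∈ peel G (k+1), ((peel G k).filter fun u => G.Adj v u).card := by
        refine Finset.sum_le_sum fun v hv => ?_
        exact (Finset.mem_filter.mp hv).2
    _ ≤ ∑ v ∈ peel G k, ((peel G k).filter fun u => G.Adj v u).card :=
        Finset.sum_le_sum_of_subset (Finset.filter_subset _ _)
    _ ≤ 2 * (peel G k).card := hds _

private lemma peel_geom {V : Type*} [Fintype V] (G : SimpleGraph V) [DecidableRel G.Adj]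
    (hds : ∀ s : Finset V, ∑ v ∈ s, ((s.filter fun u => G.Adj v u).card) ≤ 2 * s.card)
    (k : ℕ) : 3 ^ k * (peel G k).card ≤ 2 ^ k * Fintype.card V := by
  induction k with
  | zero => simp [peel]
  | succ k ih =>
    have h1 := peel_descent G hds k
    calc 3 ^ (k+1) * (peel G (k+1)).card = 3 ^ k * (3 * (peel G (k+1)).card) := by ring
      _ ≤ 3 ^ k * (2 * (peel G k).card) := Nat.mul_le_mul_left _ h1
      _ = 2 * (3 ^ k * (peel G k).card) := by ring
      _ ≤ 2 * (2 ^ k * Fintype.card V) := Nat.mul_le_mul_left _ ih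
      _ = 2 ^ (k+1) * Fintype.card V := by ring

private lemma peel_card_add {V : Type*} [Fintype V] (G : SimpleGraph V) [DecidableRel G.Adj]
    (hds : ∀ s : Finset V, ∑ v ∈ s, ((s.filter fun u => G.Adj v u).card) ≤ 2 * s.card)
    (k : ℕ) : peel G k = ∅ ∨ (peel G k).card + k ≤ Fintype.card V := by
  induction k with
  | zero => right; simp [peel]
  | succ k ih =>
    by_cases hE : peel G (k+1) = ∅
    · exact Or.inl hE
    · right
      have hkE : peel G k ≠ ∅ := by
        intro h
        exact hE (Finset.subset_empty.mp (h ▸ Finset.filter_subset _ _))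
      have hk := ih.resolve_left hkE
      have h1 := peel_descent G hds k
      have h2 : 1 ≤ (peel G (k+1)).card := Finset.card_pos.mpr (Finset.nonempty_iff_ne_empty.mpr hE)
      omega

private theorem tree_rho_decomposition' {V : Type*} [Fintype V] (G : SimpleGraph V)
    [DecidableRel G.Adj] (hT : G.IsTree) :
    ∃ (L : ℕ) (layer : V → ℕ),
      (∀ v, layer v < L) ∧
      (∀ v, ((G.neighborFinset v).filter fun u => layer v ≤ layer u).card ≤ 2) ∧
      (∀ v, ((G.neighborFinset v).filter fun u => layer u = layer v).card ≤ 2) ∧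
      (L : ℝ) ≤ 16 * Real.log (Fintype.card V) + 1 := by
  classical
  have hne : Nonempty V := hT.isConnected.nonempty
  have hn1 : 1 ≤ Fintype.card V := Fintype.card_pos
  have hds : ∀ s : Finset V, ∑ v ∈ s, ((s.filter fun u => G.Adj v u).card) ≤ 2 * s.card :=
    tree_deg_sum G hT
  have hex : ∃ k, peel G k = ∅ := by
    refine ⟨Fintype.card V, ?_⟩
    rcases peel_card_add G hds (Fintype.card V) with h | h
    · exact h
    · exact Finset.card_eq_zero.mp (by omega)
  set L := Nat.find hex with hL
  have hLspec : peel G L = ∅ := Nat.find_spec hex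
  have hL0 : L ≠ 0 := by
    intro h
    rw [h] at hLspec
    exact Finset.univ_nonempty.ne_empty hLspec
  have hvex : ∀ v : V, ∃ k, v ∉ peel G (k + 1) := by
    intro v
    refine ⟨L - 1, ?_⟩
    have hL1 : L - 1 + 1 = L := by omega
    rw [hL1, hLspec]
    exact Finset.notMem_empty v
  set layer : V → ℕ := fun v => Nat.find (hvex v) with hlayer
  have hmem : ∀ v, v ∈ peel G (layer v) := by
    intro v
    cases hlv : layer v with
    | zero => exact Finset.mem_univ v
    | succ k =>
      by_contra hc
      have h2 : layer v ≤ k := Nat.find_le (hlv ▸ hc)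
      omega
  have hnot : ∀ v, v ∉ peel G (layer v + 1) := fun v => Nat.find_spec (hvex v)
  have hdeg : ∀ v, ((peel G (layer v)).filter fun u => G.Adj v u).card ≤ 2 := by
    intro v
    by_contra hc
    exact hnot v (Finset.mem_filter.mpr ⟨hmem v, by omega⟩)
  have hcond1 : ∀ v, ((G.neighborFinset v).filter fun u => layer v ≤ layer u).card ≤ 2 := by
    intro v
    refine le_trans (Finset.card_le_card ?_) (hdeg v)
    intro u hu
    rw [Finset.mem_filter, SimpleGraph.mem_neighborFinset] at hu
    exact Finset.mem_filter.mpr ⟨peel_antitone G hu.2 (hmem u), hu.1⟩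
  refine ⟨L, layer, ?_, hcond1, ?_, ?_⟩
  · intro v
    have : layer v ≤ L - 1 := Nat.find_le (by
      have hL1 : L - 1 + 1 = L := by omega
      rw [hL1, hLspec]; exact Finset.notMem_empty v)
    omega
  · intro v
    refine le_trans (Finset.card_le_card ?_) (hcond1 v)
    intro u hu
    rw [Finset.mem_filter] at hu ⊢
    exact ⟨hu.1, le_of_eq hu.2.symm⟩
  · -- the logarithmic bound
    set m := L - 1 with hm
    have hLm : L = m + 1 := by omega
    have hmne : peel G m ≠ ∅ := Nat.find_min hex (by omega)
    have hm1 : 1 ≤ (peel G m).card :=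
      Finset.card_pos.mpr (Finset.nonempty_iff_ne_empty.mpr hmne)
    have hgeom : 3 ^ m ≤ 2 ^ m * Fintype.card V :=
      le_trans (Nat.le_mul_of_pos_right _ hm1) (peel_geom G hds m)
    have hR : ((3 : ℝ) / 2) ^ m ≤ (Fintype.card V : ℝ) := by
      rw [div_pow, div_le_iff₀ (by positivity)]
      exact_mod_cast hgeom.trans_eq (by ring)
    have hlog : (m : ℝ) * Real.log (3 / 2) ≤ Real.log (Fintype.card V) := by
      have := Real.log_le_log (by positivity) hR
      rwa [Real.log_pow] at this
    have hl32 : (1 : ℝ) / 3 ≤ Real.log (3 / 2) := by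
      have h1 := Real.log_le_sub_one_of_pos (x := 2 / 3) (by norm_num)
      have h2 : Real.log ((3 : ℝ) / 2) = -Real.log (2 / 3) := by
        rw [← Real.log_inv]; norm_num
      rw [h2]; linarith
    have hlogn : 0 ≤ Real.log (Fintype.card V) :=
      Real.log_nonneg (by exact_mod_cast hn1)
    have hmb : (m : ℝ) ≤ 16 * Real.log (Fintype.card V) := by
      have : (m : ℝ) * (1 / 3) ≤ Real.log (Fintype.card V) := by
        refine le_trans ?_ hlog
        exact mul_le_mul_of_nonneg_left hl32 (Nat.cast_nonneg m)
      nlinarith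
    rw [hLm]
    push_cast
    linarith

/-- Every finite tree admits a ρ-decomposition with `l = 3`: a partition of its vertex set
into layers `0, …, L-1` such that (i) every vertex has at most two neighbors in its own or
higher layers, and (ii) the subgraph induced by each layer consists of isolated vertices and
paths (every vertex has at most two same-layer neighbors, and layers of a tree are acyclic);
moreover the iterative rake-and-compress construction removes at least a `1/16` fraction of
the remaining vertices per step, so the number of layers satisfies `L ≤ 16·ln n + 1`. -/
theorem tree_rho_decomposition {V : Type*} [Fintype V] (G : SimpleGraph V)
    [DecidableRel G.Adj] (hT : G.IsTree) :
    ∃ (L : ℕ) (layer : V → ℕ),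
      (∀ v, layer v < L) ∧
      (∀ v, ((G.neighborFinset v).filter fun u => layer v ≤ layer u).card ≤ 2) ∧
      (∀ v, ((G.neighborFinset v).filter fun u => layer u = layer v).card ≤ 2) ∧
      (L : ℝ) ≤ 16 * Real.log (Fintype.card V) + 1 := by
  exact tree_rho_decomposition' G hT
end

section
/- In any finite forest with n vertices, the number of vertices that either have degree at most 1 or lie on a path of at least l consecutive degree-2 vertices is at least n/(2(l+1)). -/
open Finset SimpleGraph List

namespace RakeCompress

variable {V : Type*}

variable {V : Type*}

/-- The neighbor of `w` other than `u` (junk if none exists). -/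
noncomputable def other (G : SimpleGraph V) (u w : V) : V :=
  letI := Classical.propDecidable (∃ x, G.Adj w x ∧ x ≠ u)
  if h : ∃ x, G.Adj w x ∧ x ≠ u then h.choose else u

variable {G : SimpleGraph V} [Fintype V] [DecidableRel G.Adj]

lemma exists_other {u w : V} (hd : G.degree w = 2) (ha : G.Adj w u) :
    ∃ x, G.Adj w x ∧ x ≠ u := by
  classical
  have hu : u ∈ G.neighborFinset w := by rwa [mem_neighborFinset]
  have h1 : ((G.neighborFinset w).erase u).Nonempty := by
    rw [← Finset.card_pos, Finset.card_erase_of_mem hu, card_neighborFinset_eq_degree, hd]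
    norm_num
  obtain ⟨x, hx⟩ := h1
  rw [Finset.mem_erase, mem_neighborFinset] at hx
  exact ⟨x, hx.2, hx.1⟩

lemma other_adj {u w : V} (hd : G.degree w = 2) (ha : G.Adj w u) :
    G.Adj w (other G u w) ∧ other G u w ≠ u := by
  have h := exists_other hd ha
  unfold other
  rw [dif_pos h]
  exact h.choose_spec

lemma other_eq {u w x : V} (hd : G.degree w = 2) (hu : G.Adj w u) (hx : G.Adj w x)
    (hne : x ≠ u) : x = other G u w := by
  classical
  have h1 : #((G.neighborFinset w).erase u) = 1 := by
    rw [Finset.card_erase_of_mem (by rwa [mem_neighborFinset]),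
      card_neighborFinset_eq_degree, hd]
  have ho := other_adj hd hu
  have hxm : x ∈ (G.neighborFinset w).erase u :=
    Finset.mem_erase.2 ⟨hne, by rwa [mem_neighborFinset]⟩
  have hom : other G u w ∈ (G.neighborFinset w).erase u :=
    Finset.mem_erase.2 ⟨ho.2, by rw [mem_neighborFinset]; exact ho.1⟩
  obtain ⟨y, hy⟩ := Finset.card_eq_one.1 h1
  rw [hy, Finset.mem_singleton] at hxm hom
  rw [hxm, hom]

/-- The deterministic walk starting at `u` with first step to `w`. -/
noncomputable def wseq (G : SimpleGraph V) (u w : V) : ℕ → V :=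
  fun n => ((fun p : V × V => (p.2, other G p.1 p.2))^[n] (u, w)).1

lemma wseq_zero (u w : V) : wseq G u w 0 = u := rfl

lemma wseq_one (u w : V) : wseq G u w 1 = w := rfl

lemma wseq_snd (u w : V) (n : ℕ) :
    ((fun p : V × V => (p.2, other G p.1 p.2))^[n] (u, w)).2 = wseq G u w (n + 1) := by
  rw [wseq, Function.iterate_succ_apply']

lemma wseq_pair (u w : V) (n : ℕ) :
    ((fun p : V × V => (p.2, other G p.1 p.2))^[n] (u, w)) = (wseq G u w n, wseq G u w (n + 1)) :=
  Prod.ext_iff.2 ⟨rfl, wseq_snd u w n⟩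

lemma wseq_succ_succ (u w : V) (n : ℕ) :
    wseq G u w (n + 2) = other G (wseq G u w n) (wseq G u w (n + 1)) := by
  rw [show n + 2 = (n + 1) + 1 from rfl, ← wseq_snd (G := G) u w (n + 1),
    Function.iterate_succ_apply', wseq_pair]

/-- Build a walk along `f a, f (a+1), ..., f (a+k)`. -/
lemma exists_walk_seg (G : SimpleGraph V) (f : ℕ → V) :
    ∀ (k a : ℕ), (∀ j, a ≤ j → j < a + k → G.Adj (f j) (f (j + 1))) →
    ∃ p : G.Walk (f a) (f (a + k)), p.length = k ∧
      p.support = (List.range' a (k + 1)).map f := by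
  intro k
  induction k with
  | zero => exact fun a _ => ⟨SimpleGraph.Walk.nil, rfl, by simp⟩
  | succ k ih =>
    intro a hadj
    obtain ⟨p, hl, hs⟩ := ih (a + 1) (fun j hj1 hj2 => hadj j (by omega) (by omega))
    have hadj0 : G.Adj (f a) (f (a + 1)) := hadj a le_rfl (by omega)
    refine ⟨(SimpleGraph.Walk.cons hadj0 p).copy rfl (congrArg f (by omega)), ?_, ?_⟩
    · rw [SimpleGraph.Walk.length_copy, SimpleGraph.Walk.length_cons, hl]
    · rw [SimpleGraph.Walk.support_copy, SimpleGraph.Walk.support_cons, hs]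
      have h2 : List.range' a (k + 1 + 1) = a :: List.range' (a + 1) (k + 1) :=
        List.range'_succ
      rw [h2, List.map_cons]

lemma exists_walk_zero (G : SimpleGraph V) (f : ℕ → V) (i : ℕ)
    (hadj : ∀ j, j < i → G.Adj (f j) (f (j + 1))) :
    ∃ p : G.Walk (f 0) (f i), p.length = i ∧
      p.support = (List.range (i + 1)).map f := by
  obtain ⟨p, hl, hs⟩ := exists_walk_seg G f i 0 (fun j _ hj => hadj j (by omega))
  exact ⟨p.copy (congrArg f rfl) (congrArg f (by omega)), by simpa using hl,
    by rw [SimpleGraph.Walk.support_copy, hs, List.range_eq_range']⟩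



lemma walk_invariant (hG : G.IsAcyclic) {u w : V} (huw : G.Adj u w) :
    ∀ i, (∀ j, 1 ≤ j → j < i → G.degree (wseq G u w j) = 2) →
      (∀ j, j < i → G.Adj (wseq G u w j) (wseq G u w (j + 1))) ∧
      ((List.range (i + 1)).map (wseq G u w)).Nodup := by
  intro i
  induction i with
  | zero => exact fun _ => ⟨fun j hj => absurd hj (by omega), by rw [List.range_succ, List.range_zero]; simp⟩
  | succ i ih =>
    intro hdeg
    obtain ⟨hadj, hnd⟩ := ih (fun j h1 h2 => hdeg j h1 (by omega))
    have hstep : G.Adj (wseq G u w i) (wseq G u w (i + 1)) := by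
      match i, hadj, hdeg with
      | 0, _, _ => exact huw
      | (m+1), hadj, hdeg =>
        have hd : G.degree (wseq G u w (m+1)) = 2 := hdeg (m+1) (by omega) (by omega)
        have hprev : G.Adj (wseq G u w (m+1)) (wseq G u w m) := (hadj m (by omega)).symm
        have h2 := (other_adj hd hprev).1
        rwa [← wseq_succ_succ] at h2
    have hback : ∀ m, i = m + 1 → wseq G u w (i + 1) ≠ wseq G u w m := by
      intro m him
      subst him
      have hd : G.degree (wseq G u w (m+1)) = 2 := hdeg (m+1) (by omega) (by omega)
      have hprev : G.Adj (wseq G u w (m+1)) (wseq G u w m) := (hadj m (by omega)).symm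
      have h2 := (other_adj hd hprev).2
      rwa [← wseq_succ_succ] at h2
    refine ⟨?_, ?_⟩
    · intro j hj
      rcases Nat.lt_succ_iff_lt_or_eq.mp hj with h | h
      · exact hadj j h
      · subst h; exact hstep
    · rw [List.range_succ, List.map_append, List.map_cons, List.map_nil,
        List.nodup_append]
      refine ⟨hnd, List.nodup_singleton _, ?_⟩
      intro x hx y hy hx2
      simp only [List.mem_map, List.mem_range] at hx
      rw [List.mem_singleton] at hy; subst hy
      obtain ⟨r, hr, rfl⟩ := hx
      -- hx2 : wseq G u w r = wseq G u w (i + 1), r < i + 1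
      by_cases hri : r = i
      · exact hstep.ne (hri ▸ hx2)
      by_cases hri2 : i = r + 1
      · subst hri2
        exact hback r rfl hx2.symm
      -- now r + 2 ≤ i
      have hr2 : r + 2 ≤ i := by omega
      obtain ⟨A, hAl, hAs⟩ := exists_walk_seg G (wseq G u w) (i - r) r
        (fun j hj1 hj2 => hadj j (by omega))
      let A' : G.Walk (wseq G u w r) (wseq G u w i) :=
        A.copy rfl (congrArg (wseq G u w) (by omega))
      have hsub : (List.range' r (i - r + 1)).map (wseq G u w) <+
          (List.range (i + 1)).map (wseq G u w) := by
        apply List.Sublist.map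
        rw [List.range_eq_range']
        have : List.range' 0 r ++ List.range' r (i - r + 1) = List.range' 0 (i + 1) := by
          have := @List.range'_append 0 r (i - r + 1) 1
          simpa [show r + (i - r + 1) = i + 1 by omega] using this
        rw [← this]
        exact List.sublist_append_right _ _
      have hpA : A'.IsPath := by
        rw [SimpleGraph.Walk.isPath_copy, SimpleGraph.Walk.isPath_def, hAs]
        exact hsub.nodup hnd
      have hadjri : G.Adj (wseq G u w r) (wseq G u w i) := by
        rw [← hx2] at hstep
        exact hstep.symm
      have heq := hG.path_unique ⟨A', hpA⟩ (SimpleGraph.Path.singleton hadjri)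
      have hlen : A'.length = 1 := by
        have := congrArg (fun P : G.Path (wseq G u w r) (wseq G u w i) => P.1.length) heq
        simpa [SimpleGraph.Path.singleton] using this
      rw [SimpleGraph.Walk.length_copy, hAl] at hlen
      omega

lemma exists_stop (hG : G.IsAcyclic) {u w : V} (huw : G.Adj u w) :
    ∃ i, 1 ≤ i ∧ G.degree (wseq G u w i) ≠ 2 := by
  by_contra h
  push_neg at h
  have hnd := (walk_invariant hG huw (Fintype.card V + 1) (fun j h1 _ => h j h1)).2
  have hlen := hnd.length_le_card
  simp only [List.length_map, List.length_range] at hlen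
  omega

lemma direction (hG : G.IsAcyclic) {u w : V} (huw : G.Adj u w) :
    ∃ i, 1 ≤ i ∧ G.degree (wseq G u w i) ≠ 2 ∧
      ∀ j, 1 ≤ j → j < i → G.degree (wseq G u w j) = 2 := by
  classical
  have hex := exists_stop hG huw
  refine ⟨Nat.find hex, (Nat.find_spec hex).1, (Nat.find_spec hex).2, fun j h1 h2 => ?_⟩
  by_contra hne
  exact Nat.find_min hex h2 ⟨h1, hne⟩

lemma cross_nodup (hG : G.IsAcyclic) {v a b : V} (hab : a ≠ b)
    (hva : G.Adj v a) (hvb : G.Adj v b) {i j : ℕ} (hi1 : 1 ≤ i) (hj1 : 1 ≤ j)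
    (hdegA : ∀ m, 1 ≤ m → m < i → G.degree (wseq G v a m) = 2)
    (hdegB : ∀ m, 1 ≤ m → m < j → G.degree (wseq G v b m) = 2) :
    wseq G v a i ≠ wseq G v b j := by
  intro heq
  obtain ⟨hadjA, hndA⟩ := walk_invariant hG hva i hdegA
  obtain ⟨hadjB, hndB⟩ := walk_invariant hG hvb j hdegB
  obtain ⟨A, hAl, hAs⟩ := exists_walk_zero G (wseq G v a) i hadjA
  obtain ⟨B, hBl, hBs⟩ := exists_walk_zero G (wseq G v b) j hadjB
  let A' : G.Walk v (wseq G v a i) := A.copy rfl rfl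
  let B' : G.Walk v (wseq G v a i) := B.copy rfl heq.symm
  have hpA : A'.IsPath := by
    show (A.copy rfl rfl).IsPath
    rw [SimpleGraph.Walk.isPath_copy, SimpleGraph.Walk.isPath_def, hAs]; exact hndA
  have hpB : B'.IsPath := by
    show (B.copy rfl heq.symm).IsPath
    rw [SimpleGraph.Walk.isPath_copy, SimpleGraph.Walk.isPath_def, hBs]; exact hndB
  have heqP := hG.path_unique ⟨A', hpA⟩ ⟨B', hpB⟩
  have hsupp : A'.support = B'.support := by rw [Subtype.mk_eq_mk.1 heqP]
  change (A.copy rfl rfl).support = (B.copy rfl heq.symm).support at hsupp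
  rw [SimpleGraph.Walk.support_copy, SimpleGraph.Walk.support_copy, hAs, hBs] at hsupp
  have h2 := congrArg (fun L : List V => L[1]?) hsupp
  simp only [List.getElem?_map, List.getElem?_range (show 1 < i + 1 by omega),
    List.getElem?_range (show 1 < j + 1 by omega), Option.map_some] at h2
  exact hab (Option.some.inj h2)

lemma back_walk (hG : G.IsAcyclic) {v a : V} (hva : G.Adj v a) {i : ℕ} (hi1 : 1 ≤ i)
    (hdeg : ∀ m, 1 ≤ m → m < i → G.degree (wseq G v a m) = 2) :
    ∀ m, m ≤ i → wseq G (wseq G v a i) (wseq G v a (i - 1)) m = wseq G v a (i - m) := by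
  obtain ⟨hadj, hnd⟩ := walk_invariant hG hva i hdeg
  have hinj := List.inj_on_of_nodup_map hnd
  intro m
  induction m using Nat.twoStepInduction with
  | zero => intro _; rw [Nat.sub_zero]; rfl
  | one => intro _; rfl
  | more m ih1 ih2 =>
    intro hm
    rw [wseq_succ_succ, ih1 (by omega), ih2 (by omega)]
    have h1 : i - m = (i - (m + 1)) + 1 := by omega
    have h2 : i - (m + 2) = (i - (m + 1)) - 1 := by omega
    rw [h1, h2]
    set s := i - (m + 1) with hs
    have hs1 : 1 ≤ s := by omega
    have hsle : s < i := by omega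
    have hd : G.degree (wseq G v a s) = 2 := hdeg s hs1 hsle
    have hadjs : G.Adj (wseq G v a s) (wseq G v a (s + 1)) := hadj s (by omega)
    have hadjs' : G.Adj (wseq G v a s) (wseq G v a (s - 1)) := by
      have h3 := hadj (s - 1) (by omega)
      rw [show s - 1 + 1 = s from by omega] at h3
      exact h3.symm
    have hne : wseq G v a (s - 1) ≠ wseq G v a (s + 1) := by
      intro h
      have := hinj (List.mem_range.2 (show s - 1 < i + 1 by omega))
        (List.mem_range.2 (show s + 1 < i + 1 by omega)) h
      omega
    exact (other_eq hd hadjs hadjs' hne).symm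



lemma chain'_map_range' (R : V → V → Prop) (f : ℕ → V) :
    ∀ (m s : ℕ), (∀ j, s ≤ j → j + 1 < s + m → R (f j) (f (j + 1))) →
      List.Chain' R ((List.range' s m).map f) := by
  intro m
  induction m with
  | zero => intro s _; exact List.isChain_nil
  | succ m ih =>
    intro s h
    rw [List.range'_succ, List.map_cons]
    cases m with
    | zero => exact List.isChain_singleton _
    | succ m' =>
      have hrec := ih (s + 1) (fun j hj1 hj2 => h j (by omega) (by omega))
      rw [List.range'_succ, List.map_cons] at hrec ⊢
      exact List.isChain_cons_cons.2 ⟨h s le_rfl (by omega), hrec⟩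

lemma core (hG : G.IsAcyclic) (l : ℕ) {v a b : V} (hab : a ≠ b)
    (hva : G.Adj v a) (hvb : G.Adj v b) (hdeg : G.degree v = 2)
    (hbad : ¬ ∃ p : List V, p.Nodup ∧ v ∈ p ∧ l ≤ p.length ∧
        p.Chain' G.Adj ∧ ∀ u ∈ p, G.degree u = 2)
    {iA iB : ℕ} (hiA1 : 1 ≤ iA) (hiB1 : 1 ≤ iB)
    (hstopA : G.degree (wseq G v a iA) ≠ 2)
    (haliveA : ∀ j, 1 ≤ j → j < iA → G.degree (wseq G v a j) = 2)
    (haliveB : ∀ j, 1 ≤ j → j < iB → G.degree (wseq G v b j) = 2)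
    (hle : iA ≤ iB) :
    ∃ u w k, G.Adj u w ∧ G.degree u ≠ 2 ∧ k + 1 ≤ l / 2 ∧ wseq G u w (k + 1) = v := by
  obtain ⟨hadjA, hndA⟩ := walk_invariant hG hva iA haliveA
  obtain ⟨hadjB, hndB⟩ := walk_invariant hG hvb iB haliveB
  have hinjA := List.inj_on_of_nodup_map hndA
  have hinjB := List.inj_on_of_nodup_map hndB
  -- the combined chain through v
  set N := (iA - 1) + iB with hN
  set g : ℕ → V := fun t => if t < iA - 1 then wseq G v a (iA - 1 - t)
    else wseq G v b (t - (iA - 1)) with hg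
  have hgA : ∀ t, t < iA - 1 → g t = wseq G v a (iA - 1 - t) := fun t ht => if_pos ht
  have hgB : ∀ t, iA - 1 ≤ t → g t = wseq G v b (t - (iA - 1)) := fun t ht => by
    simp only [hg, if_neg (by omega : ¬ t < iA - 1)]
  -- all vertices of the chain have degree 2
  have hdeg2 : ∀ t, t < N → G.degree (g t) = 2 := by
    intro t ht
    by_cases h : t < iA - 1
    · rw [hgA t h]; exact haliveA _ (by omega) (by omega)
    · rw [hgB t (by omega)]
      rcases Nat.eq_or_lt_of_le (show iA - 1 ≤ t by omega) with h1 | h1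
      · rw [← h1, Nat.sub_self]; exact hdeg
      · exact haliveB _ (by omega) (by omega)
  -- chain of adjacencies
  have hchain : ∀ t, t + 1 < N → G.Adj (g t) (g (t + 1)) := by
    intro t ht
    by_cases h : t + 1 < iA - 1
    · rw [hgA t (by omega), hgA (t + 1) h]
      have := hadjA (iA - 1 - (t + 1)) (by omega)
      rw [show iA - 1 - (t + 1) + 1 = iA - 1 - t from by omega] at this
      exact this.symm
    · by_cases h2 : t < iA - 1
      · -- t = iA - 2, junction within A to index 1 then next is B index 0 = v?
        -- here t + 1 = iA - 1: g t = wseq v a 1 = a, g (t+1) = wseq v b 0 = v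
        rw [hgA t h2, hgB (t + 1) (by omega)]
        rw [show iA - 1 - t = 1 from by omega, show t + 1 - (iA - 1) = 0 from by omega]
        exact hva.symm
      · rw [hgB t (by omega), hgB (t + 1) (by omega)]
        rw [show t + 1 - (iA - 1) = (t - (iA - 1)) + 1 from by omega]
        exact hadjB (t - (iA - 1)) (by omega)
  -- injectivity of g on range N
  have hginj : ∀ t1 ∈ List.range N, ∀ t2 ∈ List.range N, g t1 = g t2 → t1 = t2 := by
    have key : ∀ t1 t2, t1 < N → t2 < N → t1 < iA - 1 → iA - 1 ≤ t2 → g t1 ≠ g t2 := by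
      intro t1 t2 h1 h2 hA hB
      rw [hgA t1 hA, hgB t2 hB]
      set i := iA - 1 - t1 with hi
      set j := t2 - (iA - 1) with hj
      rcases Nat.eq_zero_or_pos j with hj0 | hj0
      · rw [hj0]
        intro heq
        have := hinjA (List.mem_range.2 (show i < iA + 1 by omega))
          (List.mem_range.2 (show 0 < iA + 1 by omega)) heq
        omega
      · exact cross_nodup hG hab hva hvb (by omega) (by omega)
          (fun m hm1 hm2 => haliveA m hm1 (by omega))
          (fun m hm1 hm2 => haliveB m hm1 (by omega))
    intro t1 ht1 t2 ht2 heq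
    rw [List.mem_range] at ht1 ht2
    by_cases h1 : t1 < iA - 1 <;> by_cases h2 : t2 < iA - 1
    · rw [hgA t1 h1, hgA t2 h2] at heq
      have := hinjA (List.mem_range.2 (show iA - 1 - t1 < iA + 1 by omega))
        (List.mem_range.2 (show iA - 1 - t2 < iA + 1 by omega)) heq
      omega
    · exact absurd heq (key t1 t2 ht1 ht2 h1 (by omega))
    · exact absurd heq.symm (key t2 t1 ht2 ht1 h2 (by omega))
    · rw [hgB t1 (by omega), hgB t2 (by omega)] at heq
      have := hinjB (List.mem_range.2 (show t1 - (iA - 1) < iB + 1 by omega))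
        (List.mem_range.2 (show t2 - (iA - 1) < iB + 1 by omega)) heq
      omega
  -- the chain list
  set p : List V := (List.range N).map g with hp
  have hlenp : p.length = N := by simp [hp]
  have hndp : p.Nodup := (List.nodup_range (n := N)).map_on hginj
  have hvmem : v ∈ p := by
    rw [hp]
    refine List.mem_map.2 ⟨iA - 1, List.mem_range.2 (by omega), ?_⟩
    rw [hgB (iA - 1) le_rfl, Nat.sub_self]
    rfl
  have hchainp : p.Chain' G.Adj := by
    rw [hp, List.range_eq_range']
    exact chain'_map_range' G.Adj g N 0 (fun j hj1 hj2 => hchain j (by omega))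
  have hall2 : ∀ u ∈ p, G.degree u = 2 := by
    intro u hu
    obtain ⟨t, ht, rfl⟩ := List.mem_map.1 hu
    exact hdeg2 t (List.mem_range.1 ht)
  -- since v is bad, the chain is short
  have hshort : N < l := by
    by_contra hlong
    exact hbad ⟨p, hndp, hvmem, by omega, hchainp, hall2⟩
  have hsum : iA + iB ≤ l := by omega
  have hiAK : iA ≤ l / 2 := (Nat.le_div_iff_mul_le (by norm_num)).2 (by omega)
  refine ⟨wseq G v a iA, wseq G v a (iA - 1), iA - 1, ?_, hstopA, by omega, ?_⟩
  · have := hadjA (iA - 1) (by omega)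
    rw [show iA - 1 + 1 = iA from by omega] at this
    exact this.symm
  · rw [show iA - 1 + 1 = iA from by omega]
    have := back_walk hG hva hiA1 haliveA iA le_rfl
    rwa [Nat.sub_self] at this

lemma bad_recover (hG : G.IsAcyclic) (l : ℕ) {v : V} (hdeg : G.degree v = 2)
    (hbad : ¬ ∃ p : List V, p.Nodup ∧ v ∈ p ∧ l ≤ p.length ∧
        p.Chain' G.Adj ∧ ∀ u ∈ p, G.degree u = 2) :
    ∃ u w k, G.Adj u w ∧ G.degree u ≠ 2 ∧ k + 1 ≤ l / 2 ∧ wseq G u w (k + 1) = v := by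
  classical
  have hcard : #(G.neighborFinset v) = 2 := by
    rw [card_neighborFinset_eq_degree]; exact hdeg
  obtain ⟨a, b, hab, hnbhd⟩ := Finset.card_eq_two.1 hcard
  have hva : G.Adj v a := by
    rw [← mem_neighborFinset, hnbhd]; simp
  have hvb : G.Adj v b := by
    rw [← mem_neighborFinset, hnbhd]; simp
  obtain ⟨iA, hiA1, hstopA, haliveA⟩ := direction hG hva
  obtain ⟨iB, hiB1, hstopB, haliveB⟩ := direction hG hvb
  rcases le_total iA iB with h | h
  · exact core hG l hab hva hvb hdeg hbad hiA1 hiB1 hstopA haliveA haliveB h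
  · exact core hG l hab.symm hvb hva hdeg hbad hiB1 hiA1 hstopB haliveB haliveA h



section Forest

variable [DecidableEq V]

/-- The chosen root of the component of `v`. -/
noncomputable def root (G : SimpleGraph V) (v : V) : V :=
  Quot.out (G.connectedComponentMk v)

omit [Fintype V] [DecidableRel G.Adj] [DecidableEq V] in
lemma connectedComponentMk_root (G : SimpleGraph V) (v : V) :
    G.connectedComponentMk (root G v) = G.connectedComponentMk v :=
  Quot.out_eq _

omit [Fintype V] [DecidableRel G.Adj] [DecidableEq V] in
lemma reachable_root (G : SimpleGraph V) (v : V) : G.Reachable v (root G v) :=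
  (ConnectedComponent.eq.1 (connectedComponentMk_root G v)).symm

omit [Fintype V] [DecidableRel G.Adj] [DecidableEq V] in
lemma root_adj {x y : V} (h : G.Adj x y) : root G x = root G y := by
  unfold root
  rw [ConnectedComponent.eq.2 h.reachable]

omit [Fintype V] [DecidableRel G.Adj] [DecidableEq V] in
lemma root_root (G : SimpleGraph V) (v : V) : root G (root G v) = root G v :=
  congrArg Quot.out (connectedComponentMk_root G v)

/-- distance to the root -/
noncomputable def droot (G : SimpleGraph V) (v : V) : ℕ := G.dist v (root G v)

omit [Fintype V] [DecidableRel G.Adj] in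
lemma dist_lt_of_mem_geodesic {x r : V} {p : G.Walk x r} (hp : p.length = G.dist x r)
    {y : V} (hmem : y ∈ p.support) (hxy : y ≠ x) : G.dist y r < G.dist x r := by
  have htake : 1 ≤ (p.takeUntil y hmem).length := by
    by_contra h
    exact hxy (SimpleGraph.Walk.eq_of_length_eq_zero
      (p := p.takeUntil y hmem) (by omega)).symm
  have hspec : (p.takeUntil y hmem).length + (p.dropUntil y hmem).length = p.length := by
    rw [← SimpleGraph.Walk.length_append, SimpleGraph.Walk.take_spec]
  have hd : G.dist y r ≤ (p.dropUntil y hmem).length := SimpleGraph.dist_le _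
  omega

omit [Fintype V] [DecidableRel G.Adj] in
lemma droot_ne_of_adj (hG : G.IsAcyclic) {x y : V} (h : G.Adj x y) :
    droot G x ≠ droot G y := by
  intro heq
  have hry : root G y = root G x := (root_adj h).symm
  obtain ⟨P, hP, hPl⟩ := (reachable_root G x).exists_path_of_dist
  have hymem : y ∉ P.support := by
    intro hmem
    have hlt := dist_lt_of_mem_geodesic hPl hmem h.ne'
    have hyr : G.dist y (root G x) = droot G y := by rw [droot, hry]
    have hxr : G.dist x (root G x) = droot G x := rfl
    omega
  have hP' : (SimpleGraph.Walk.cons h.symm P).IsPath :=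
    (SimpleGraph.Walk.cons_isPath_iff _ _).2 ⟨hP, hymem⟩
  obtain ⟨Q, hQ, hQl⟩ := (reachable_root G y).exists_path_of_dist
  let Q' := Q.copy rfl hry
  have hQ' : Q'.IsPath := (SimpleGraph.Walk.isPath_copy _ _ _).2 hQ
  have hequ := hG.path_unique ⟨SimpleGraph.Walk.cons h.symm P, hP'⟩ ⟨Q', hQ'⟩
  have hlen : (SimpleGraph.Walk.cons h.symm P).length = Q'.length := by
    rw [Subtype.mk_eq_mk.1 hequ]
  rw [SimpleGraph.Walk.length_cons, SimpleGraph.Walk.length_copy] at hlen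
  rw [hPl, hQl] at hlen
  have : G.dist y (root G y) = droot G y := rfl
  have h2 : G.dist x (root G x) = droot G x := rfl
  omega

omit [Fintype V] [DecidableRel G.Adj] in
lemma adj_root_inj (hG : G.IsAcyclic) {x1 x2 y : V} (h1 : G.Adj x1 y) (h2 : G.Adj x2 y)
    (hd1 : droot G x1 < droot G y) (hd2 : droot G x2 < droot G y) : x1 = x2 := by
  have hr1 : root G x1 = root G y := root_adj h1
  have hr2 : root G x2 = root G y := root_adj h2
  obtain ⟨P1, hP1, hP1l⟩ := (reachable_root G x1).exists_path_of_dist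
  obtain ⟨P2, hP2, hP2l⟩ := (reachable_root G x2).exists_path_of_dist
  have hy1 : y ∉ P1.support := by
    intro hmem
    have hlt := dist_lt_of_mem_geodesic hP1l hmem h1.ne'
    have hyr : G.dist y (root G x1) = droot G y := by rw [droot, hr1]
    have hxr : G.dist x1 (root G x1) = droot G x1 := rfl
    omega
  have hy2 : y ∉ P2.support := by
    intro hmem
    have hlt := dist_lt_of_mem_geodesic hP2l hmem h2.ne'
    have hyr : G.dist y (root G x2) = droot G y := by rw [droot, hr2]
    have hxr : G.dist x2 (root G x2) = droot G x2 := rfl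
    omega
  let W1 : G.Walk y (root G y) := (SimpleGraph.Walk.cons h1.symm P1).copy rfl hr1
  let W2 : G.Walk y (root G y) := (SimpleGraph.Walk.cons h2.symm P2).copy rfl hr2
  have hW1 : W1.IsPath := (SimpleGraph.Walk.isPath_copy _ _ _).2
    ((SimpleGraph.Walk.cons_isPath_iff _ _).2 ⟨hP1, hy1⟩)
  have hW2 : W2.IsPath := (SimpleGraph.Walk.isPath_copy _ _ _).2
    ((SimpleGraph.Walk.cons_isPath_iff _ _).2 ⟨hP2, hy2⟩)
  have hequ := hG.path_unique ⟨W1, hW1⟩ ⟨W2, hW2⟩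
  have hsupp : W1.support = W2.support := by rw [Subtype.mk_eq_mk.1 hequ]
  have hs1 : W1.support = y :: x1 :: P1.support.tail := by
    show ((SimpleGraph.Walk.cons h1.symm P1).copy rfl hr1).support = _
    rw [SimpleGraph.Walk.support_copy, SimpleGraph.Walk.support_cons]
    congr 1
    exact SimpleGraph.Walk.support_eq_cons _
  have hs2 : W2.support = y :: x2 :: P2.support.tail := by
    show ((SimpleGraph.Walk.cons h2.symm P2).copy rfl hr2).support = _
    rw [SimpleGraph.Walk.support_copy, SimpleGraph.Walk.support_cons]
    congr 1
    exact SimpleGraph.Walk.support_eq_cons _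
  rw [hs1, hs2] at hsupp
  have h3 : x1 :: P1.support.tail = x2 :: P2.support.tail := (List.cons_eq_cons.1 hsupp).2
  exact (List.cons_eq_cons.1 h3).1

lemma forest_bound (hG : G.IsAcyclic) :
    (∑ v, G.degree v) + 2 * #(univ.image (root G)) ≤ 2 * Fintype.card V := by
  classical
  set R := univ.image (root G) with hR
  set D := univ.filter (fun p : V × V => G.Adj p.1 p.2) with hD
  have hDdeg : ∑ v, G.degree v = #D := by
    rw [sum_degrees_eq_twice_card_edges, two_mul_card_edgeFinset, hD]
  set Dlt := D.filter (fun p => droot G p.1 < droot G p.2) with hDlt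
  have hsplit : #Dlt + #(D.filter fun p => ¬ droot G p.1 < droot G p.2) = #D :=
    Finset.card_filter_add_card_filter_not _
  have hswap : #(D.filter fun p => ¬ droot G p.1 < droot G p.2) = #Dlt := by
    apply Finset.card_bij (fun p _ => (p.2, p.1))
    · intro p hp
      rw [Finset.mem_filter, hD, Finset.mem_filter] at hp
      have hadj := hp.1.2
      have hne := droot_ne_of_adj hG hadj
      rw [hDlt, Finset.mem_filter, hD, Finset.mem_filter]
      refine ⟨⟨Finset.mem_univ _, hadj.symm⟩, ?_⟩
      have h5 := hp.2
      show droot G p.2 < droot G p.1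
      omega
    · intro p hp q hq hpq
      have h1 : p.2 = q.2 := congrArg Prod.fst hpq
      have h2 : p.1 = q.1 := congrArg Prod.snd hpq
      exact Prod.ext h2 h1
    · intro q hq
      rw [hDlt, Finset.mem_filter, hD, Finset.mem_filter] at hq
      refine ⟨(q.2, q.1), ?_, rfl⟩
      rw [Finset.mem_filter, hD, Finset.mem_filter]
      refine ⟨⟨Finset.mem_univ _, hq.1.2.symm⟩, ?_⟩
      have h5 := hq.2
      show ¬ droot G q.2 < droot G q.1
      omega
  have hinj : #Dlt ≤ #(univ \ R) := by
    apply Finset.card_le_card_of_injOn (fun p => p.2)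
    · intro p hp
      rw [Finset.mem_coe, hDlt, Finset.mem_filter] at hp
      rw [Finset.mem_coe, Finset.mem_sdiff]
      refine ⟨Finset.mem_univ _, ?_⟩
      intro hmem
      rw [hR, Finset.mem_image] at hmem
      obtain ⟨z, _, hz⟩ := hmem
      have : root G p.2 = p.2 := by simp only at hz; rw [← hz, root_root]
      have : droot G p.2 = 0 := by rw [droot, this, SimpleGraph.dist_self]
      omega
    · intro p hp q hq hpq
      rw [Finset.mem_coe, hDlt, Finset.mem_filter, hD, Finset.mem_filter] at hp hq
      simp only at hpq
      have h1 : p.1 = q.1 := by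
        apply adj_root_inj hG (hpq ▸ hp.1.2) hq.1.2
        · rw [← hpq]; exact hp.2
        · exact hq.2
      exact Prod.ext h1 hpq
  have hRcard : #R ≤ Fintype.card V := by
    rw [← Finset.card_univ]
    exact Finset.card_le_card (Finset.subset_univ _)
  have hsd : #(univ \ R) = Fintype.card V - #R := by
    rw [Finset.card_sdiff_of_subset (Finset.subset_univ _), Finset.card_univ]
  omega

lemma isolated_le_roots (G : SimpleGraph V) [DecidableRel G.Adj] :
    #(univ.filter fun v => G.degree v = 0) ≤ #(univ.image (root G)) := by
  apply Finset.card_le_card_of_injOn (root G)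
  · intro v _
    exact Finset.mem_image_of_mem _ (Finset.mem_univ _)
  · intro v hv w hw hvw
    simp only [Finset.coe_filter, Set.mem_setOf_eq, Finset.mem_filter] at hv hw
    have hmk : G.connectedComponentMk v = G.connectedComponentMk w := by
      rw [← connectedComponentMk_root G v, ← connectedComponentMk_root G w, hvw]
    obtain ⟨p⟩ := ConnectedComponent.eq.1 hmk
    cases p with
    | nil => rfl
    | cons h q =>
      exfalso
      have hx := (G.mem_neighborFinset v _).2 h
      rw [Finset.card_eq_zero.1 (show #(G.neighborFinset v) = 0 by
        rw [card_neighborFinset_eq_degree]; exact hv.2)] at hx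
      exact absurd hx (Finset.notMem_empty _)

end Forest



end RakeCompress

open RakeCompress in
/-- In any finite forest with `n` vertices, the vertices that either have degree at most 1 or
lie on a path of at least `l` consecutive degree-2 vertices number at least `n / (2(l+1))`. -/
theorem rake_compress_elimination {V : Type*} [Fintype V] (G : SimpleGraph V)
    [DecidableRel G.Adj] (hforest : G.IsAcyclic) (l : ℕ) (hl : 1 ≤ l) :
    (Fintype.card V : ℝ) / (2 * (l + 1)) ≤
      ({v : V | G.degree v ≤ 1 ∨
        ∃ p : List V, p.Nodup ∧ v ∈ p ∧ l ≤ p.length ∧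
          p.Chain' G.Adj ∧ ∀ u ∈ p, G.degree u = 2}.ncard : ℝ) := by
  classical
  set cond : V → Prop := fun v => ∃ p : List V, p.Nodup ∧ v ∈ p ∧ l ≤ p.length ∧
      p.Chain' G.Adj ∧ ∀ u ∈ p, G.degree u = 2 with hcond
  have hcond2 : ∀ v, cond v → G.degree v = 2 := by
    rintro v ⟨p, _, hmem, _, _, h2⟩
    exact h2 v hmem
  set Sfin : Finset V := univ.filter (fun v => G.degree v ≤ 1 ∨ cond v) with hSfin
  have hSet : {v : V | G.degree v ≤ 1 ∨ cond v} = ↑Sfin := by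
    ext v
    simp [hSfin]
  set A1 : Finset V := univ.filter (fun v => G.degree v ≤ 1) with hA1
  set A2 : Finset V := univ.filter (fun v => G.degree v = 2) with hA2
  set A3 : Finset V := univ.filter (fun v => 3 ≤ G.degree v) with hA3
  set A0 : Finset V := univ.filter (fun v => G.degree v = 0) with hA0
  set Good : Finset V := univ.filter (fun v => G.degree v = 2 ∧ cond v) with hGood
  set Bad : Finset V := univ.filter (fun v => G.degree v = 2 ∧ ¬ cond v) with hBad
  set Dne : Finset (V × V) := univ.filter (fun p : V × V => G.Adj p.1 p.2 ∧ G.degree p.1 ≠ 2)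
    with hDne
  -- forest bounds
  have f1 : (∑ v, G.degree v) + 2 * #(univ.image (root G)) ≤ 2 * Fintype.card V :=
    forest_bound hforest
  have f2 : #A0 ≤ #(univ.image (root G)) := isolated_le_roots G
  -- SA1 + n0 = n1
  have f3 : (∑ v ∈ A1, G.degree v) + #A0 = #A1 := by
    have e1 : ∀ v ∈ A1, (G.degree v + if G.degree v = 0 then 1 else 0) = 1 := by
      intro v hv
      rw [hA1, Finset.mem_filter] at hv
      have := hv.2
      split_ifs <;> omega
    have e2 : (∑ v ∈ A1, (G.degree v + if G.degree v = 0 then 1 else 0)) = #A1 := by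
      rw [Finset.sum_congr rfl e1, Finset.sum_const, smul_eq_mul, mul_one]
    rw [Finset.sum_add_distrib] at e2
    have e3 : (∑ v ∈ A1, if G.degree v = 0 then 1 else 0) = #A0 := by
      rw [← Finset.sum_filter, Finset.sum_const, smul_eq_mul, mul_one]
      congr 1
      rw [hA1, Finset.filter_filter, hA0]
      apply Finset.filter_congr
      intro v _
      constructor
      · exact fun h => h.2
      · intro h; exact ⟨by omega, h⟩
    rw [e3] at e2
    exact e2
  -- filter identities
  have hfe1 : (univ.filter (fun v => ¬ G.degree v ≤ 1)).filter (fun v => G.degree v = 2)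
      = A2 := by
    rw [Finset.filter_filter, hA2]
    apply Finset.filter_congr
    intro v _
    constructor
    · exact fun h => h.2
    · intro h; exact ⟨by omega, h⟩
  have hfe2 : (univ.filter (fun v => ¬ G.degree v ≤ 1)).filter (fun v => ¬ G.degree v = 2)
      = A3 := by
    rw [Finset.filter_filter, hA3]
    apply Finset.filter_congr
    intro v _
    constructor
    · rintro ⟨h1, h2⟩; omega
    · intro h; exact ⟨by omega, by omega⟩
  -- partition of the degree sum
  have f4 : (∑ v, G.degree v) =
      (∑ v ∈ A1, G.degree v) + (∑ v ∈ A2, G.degree v) + (∑ v ∈ A3, G.degree v) := by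
    have h41 := Finset.sum_filter_add_sum_filter_not univ
      (fun v => G.degree v ≤ 1) (fun v => G.degree v)
    have h42 := Finset.sum_filter_add_sum_filter_not
      (univ.filter (fun v => ¬ G.degree v ≤ 1)) (fun v => G.degree v = 2) (fun v => G.degree v)
    rw [hfe1, hfe2] at h42
    rw [← hA1] at h41
    omega
  -- partition of the vertex count
  have f4' : Fintype.card V = #A1 + #A2 + #A3 := by
    have h41 := Finset.card_filter_add_card_filter_not (s := (univ : Finset V))
      (p := fun v => G.degree v ≤ 1)
    have h42 := Finset.card_filter_add_card_filter_not
      (s := univ.filter (fun v => ¬ G.degree v ≤ 1)) (p := fun v => G.degree v = 2)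
    rw [hfe1, hfe2] at h42
    rw [← hA1] at h41
    rw [← Finset.card_univ]
    omega
  have f5 : (∑ v ∈ A2, G.degree v) = 2 * #A2 := by
    rw [Finset.sum_congr rfl (fun v hv => (Finset.mem_filter.1 hv).2), Finset.sum_const,
      smul_eq_mul, mul_comm]
  have f6 : 3 * #A3 ≤ (∑ v ∈ A3, G.degree v) := by
    have := Finset.card_nsmul_le_sum A3 (fun v => G.degree v) 3 (fun v hv => (Finset.mem_filter.1 hv).2)
    rw [smul_eq_mul, mul_comm] at this
    exact this
  have f7 : #A2 = #Good + #Bad := by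
    have h := Finset.card_filter_add_card_filter_not (s := A2) (p := cond)
    have hg : A2.filter cond = Good := by
      rw [hA2, Finset.filter_filter, hGood]
    have hb : A2.filter (fun v => ¬ cond v) = Bad := by
      rw [hA2, Finset.filter_filter, hBad]
    rw [hg, hb] at h
    omega
  -- the size of S
  have f8 : #Sfin = #A1 + #Good := by
    have h := Finset.card_filter_add_card_filter_not (s := Sfin)
      (p := fun v => G.degree v ≤ 1)
    have hg : Sfin.filter (fun v => G.degree v ≤ 1) = A1 := by
      rw [hSfin, Finset.filter_filter, hA1]
      apply Finset.filter_congr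
      intro v _
      constructor
      · exact fun h => h.2
      · intro h; exact ⟨Or.inl h, h⟩
    have hb : Sfin.filter (fun v => ¬ G.degree v ≤ 1) = Good := by
      rw [hSfin, Finset.filter_filter, hGood]
      apply Finset.filter_congr
      intro v _
      constructor
      · rintro ⟨h1 | h1, h2⟩
        · exact absurd h1 h2
        · exact ⟨hcond2 v h1, h1⟩
      · rintro ⟨h1, h2⟩
        exact ⟨Or.inr h2, by omega⟩
    rw [hg, hb] at h
    omega
  -- the charging bound
  have f9 : #Bad ≤ #Dne * (l / 2) := by
    have hsub : Bad ⊆ (Dne ×ˢ Finset.range (l / 2)).image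
        (fun t : (V × V) × ℕ => wseq G t.1.1 t.1.2 (t.2 + 1)) := by
      intro v hv
      rw [hBad, Finset.mem_filter] at hv
      obtain ⟨u, w, k, hadj, hne2, hkK, hrec⟩ := bad_recover hforest l hv.2.1 hv.2.2
      refine Finset.mem_image.2 ⟨((u, w), k), ?_, hrec⟩
      rw [Finset.mem_product]
      exact ⟨Finset.mem_filter.2 ⟨Finset.mem_univ _, hadj, hne2⟩,
        Finset.mem_range.2 (by omega)⟩
    calc #Bad ≤ #((Dne ×ˢ Finset.range (l / 2)).image
        (fun t : (V × V) × ℕ => wseq G t.1.1 t.1.2 (t.2 + 1))) := Finset.card_le_card hsub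
      _ ≤ #(Dne ×ˢ Finset.range (l / 2)) := Finset.card_image_le
      _ = #Dne * (l / 2) := by rw [Finset.card_product, Finset.card_range]
  -- computing #Dne
  have f10 : #Dne = (∑ v ∈ A1, G.degree v) + (∑ v ∈ A3, G.degree v) := by
    have hfib : ∀ p ∈ Dne, p.1 ∈ univ.filter (fun v => G.degree v ≠ 2) :=
      fun p hp => Finset.mem_filter.2 ⟨Finset.mem_univ _, ((Finset.mem_filter.1 hp).2).2⟩
    rw [Finset.card_eq_sum_card_fiberwise hfib]
    have hfiber : ∀ v ∈ univ.filter (fun v => G.degree v ≠ 2),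
        #(Dne.filter (fun p => p.1 = v)) = G.degree v := by
      intro v hv
      rw [← card_neighborFinset_eq_degree]
      apply Finset.card_bij (fun p _ => p.2)
      · intro p hp
        rw [Finset.mem_filter, hDne, Finset.mem_filter] at hp
        rw [mem_neighborFinset]
        have := hp.1.2.1
        rwa [hp.2] at this
      · intro p hp q hq hpq
        rw [Finset.mem_filter] at hp hq
        exact Prod.ext (hp.2.trans hq.2.symm) hpq
      · intro w hw
        refine ⟨(v, w), ?_, rfl⟩
        rw [Finset.mem_filter, hDne, Finset.mem_filter]
        rw [mem_neighborFinset] at hw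
        exact ⟨⟨Finset.mem_univ _, hw, (Finset.mem_filter.1 hv).2⟩, rfl⟩
    rw [Finset.sum_congr rfl hfiber]
    have h101 := Finset.sum_filter_add_sum_filter_not
      (univ.filter (fun v => G.degree v ≠ 2)) (fun v => G.degree v ≤ 1) (fun v => G.degree v)
    have hg1 : (univ.filter (fun v => G.degree v ≠ 2)).filter (fun v => G.degree v ≤ 1)
        = A1 := by
      rw [Finset.filter_filter, hA1]
      apply Finset.filter_congr
      intro v _
      constructor
      · exact fun h => h.2
      · intro h; exact ⟨by omega, h⟩
    have hg2 : (univ.filter (fun v => G.degree v ≠ 2)).filter (fun v => ¬ G.degree v ≤ 1)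
        = A3 := by
      rw [Finset.filter_filter, hA3]
      apply Finset.filter_congr
      intro v _
      constructor
      · rintro ⟨h1, h2⟩; omega
      · intro h; exact ⟨by omega, by omega⟩
    rw [hg1, hg2] at h101
    omega
  -- assembling the arithmetic
  have e_n3 : #A3 ≤ #A1 := by omega
  have e_dne4 : #Dne ≤ 4 * #A1 := by omega
  have e_bad : #Bad ≤ 2 * l * #A1 := by
    have hK2 : 2 * (l / 2) ≤ l := by omega
    calc #Bad ≤ #Dne * (l / 2) := f9
      _ ≤ (4 * #A1) * (l / 2) := Nat.mul_le_mul_right _ e_dne4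
      _ = (2 * #A1) * (2 * (l / 2)) := by ring
      _ ≤ (2 * #A1) * l := Nat.mul_le_mul_left _ hK2
      _ = 2 * l * #A1 := by ring
  have final : Fintype.card V ≤ (2 * l + 2) * (#A1 + #Good) := by
    nlinarith [e_bad, e_n3, f4', f7]
  -- conclude over the reals
  rw [hSet, Set.ncard_coe_finset, f8]
  rw [div_le_iff₀ (by positivity : (0:ℝ) < 2 * ((l : ℝ) + 1))]
  have hfin' : (Fintype.card V : ℝ) ≤ ((2 * l + 2) * (#A1 + #Good) : ℕ) :=
    Nat.cast_le.2 final
  push_cast at hfin' ⊢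
  nlinarith [hfin']
end
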